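/- Let g : ℝ → ℝ be a C¹ function whose zero set is finite and all of whose zeros are simple (g(z) = 0 implies g'(z) ≠ 0), and let A < B be real numbers such that every zero of g lies in the open interval (A,B). Then there exists δ > 0 such that every C¹ function f : ℝ → ℝ satisfying sup over t ∈ [A,B] of (|f(t) − g(t)| + |f'(t) − g'(t)|) < δ and f(t) ≠ 0 for every t ∉ [A,B] has a finite zero set of the same cardinality as the zero set of g. -/

import Mathlib

open Filter Topology Set

/-- Zero-counting stability: a C¹ function with finitely many simple zeros, all lying in
`(A,B)`, has the same number of zeros as any C¹ function that is C¹-close to it on `[A,B]`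
and nonvanishing outside `[A,B]`. -/

private lemma key_unique_zero {f : ℝ → ℝ} (hfc : Continuous f) {a b : ℝ} (hab : a < b)
    (hpos : ∀ t ∈ Set.Icc a b, 0 < deriv f t) (ha : f a < 0) (hb : 0 < f b) :
    ∃ s, (s ∈ Set.Ioo a b ∧ f s = 0) ∧ ∀ y, (y ∈ Set.Ioo a b ∧ f y = 0) → y = s := by
  have hmono : StrictMonoOn f (Set.Icc a b) :=
    strictMonoOn_of_deriv_pos (convex_Icc a b) hfc.continuousOn
      (fun t ht => hpos t (by rw [interior_Icc] at ht; exact Set.Ioo_subset_Icc_self ht))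
  obtain ⟨s, hs, hfs⟩ := intermediate_value_Ioo hab.le hfc.continuousOn
    (show (0:ℝ) ∈ Set.Ioo (f a) (f b) from ⟨ha, hb⟩)
  refine ⟨s, ⟨hs, hfs⟩, fun y ⟨hy, hfy⟩ => ?_⟩
  exact hmono.injOn (Set.Ioo_subset_Icc_self hy) (Set.Ioo_subset_Icc_self hs)
    (by rw [hfy, hfs])

theorem stmt_9 (g : ℝ → ℝ) (hg : ContDiff ℝ 1 g)
    (hfin : {t : ℝ | g t = 0}.Finite)
    (hsimple : ∀ z : ℝ, g z = 0 → deriv g z ≠ 0)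
    (A B : ℝ) (hAB : A < B)
    (hzeros : ∀ z : ℝ, g z = 0 → z ∈ Set.Ioo A B) :
    ∃ δ > (0 : ℝ), ∀ f : ℝ → ℝ, ContDiff ℝ 1 f →
      (∀ t ∈ Set.Icc A B, |f t - g t| + |deriv f t - deriv g t| < δ) →
      (∀ t ∉ Set.Icc A B, f t ≠ 0) →
      {t : ℝ | f t = 0}.Finite ∧ {t : ℝ | f t = 0}.ncard = {t : ℝ | g t = 0}.ncard := by
  classical
  have hgc : Continuous g := hg.continuous
  have hg' : Continuous (deriv g) := hg.continuous_deriv le_rfl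
  set Zf : Finset ℝ := hfin.toFinset with hZf
  have hZmem : ∀ z : ℝ, z ∈ Zf ↔ g z = 0 := fun z => hfin.mem_toFinset
  by_cases hne : Zf.Nonempty
  · -- main case: at least one zero
    -- radius of sign control for deriv g near each zero
    have hrad : ∀ z ∈ Zf, ∃ ρ > 0, ∀ t : ℝ, |t - z| < ρ →
        |deriv g t - deriv g z| < |deriv g z| / 2 := by
      intro z hz
      have hd : deriv g z ≠ 0 := hsimple z ((hZmem z).1 hz)
      have hpos : 0 < |deriv g z| / 2 := by positivity
      obtain ⟨ρ, hρ, h⟩ := Metric.continuousAt_iff.mp (hg'.continuousAt (x := z)) _ hpos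
      exact ⟨ρ, hρ, fun t ht => by
        simpa [Real.dist_eq] using h (by simpa [Real.dist_eq] using ht)⟩
    choose! ρ hρpos hρ using hrad
    -- minimal pairwise distance
    set P : Finset (ℝ × ℝ) := (Zf ×ˢ Zf).filter (fun p => p.1 ≠ p.2) with hP
    set dmin : ℝ := if hPne : P.Nonempty then P.inf' hPne (fun p => |p.1 - p.2|) else 1
      with hdmin
    have hPmem : ∀ p : ℝ × ℝ, p ∈ P ↔ p.1 ∈ Zf ∧ p.2 ∈ Zf ∧ p.1 ≠ p.2 := by
      intro p
      simp [hP, Finset.mem_filter, Finset.mem_product, and_assoc]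
    have hdmin_pos : 0 < dmin := by
      rw [hdmin]
      split
      · rename_i hPne
        rw [Finset.lt_inf'_iff]
        intro p hp
        have := ((hPmem p).1 hp).2.2
        have : p.1 - p.2 ≠ 0 := sub_ne_zero.mpr this
        exact abs_pos.mpr this
      · exact one_pos
    have hdmin_le : ∀ z ∈ Zf, ∀ z' ∈ Zf, z ≠ z' → dmin ≤ |z - z'| := by
      intro z hz z' hz' hne'
      have hp : (z, z') ∈ P := (hPmem (z, z')).2 ⟨hz, hz', hne'⟩
      have hPne : P.Nonempty := ⟨_, hp⟩
      rw [hdmin, dif_pos hPne]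
      exact Finset.inf'_le _ hp
    -- choice of the radius r
    set m : ℝ := Zf.inf' hne (fun z => min (ρ z) (min (z - A) (B - z))) with hm
    have hmpos : 0 < m := by
      rw [hm, Finset.lt_inf'_iff]
      intro z hz
      obtain ⟨hA1, hB1⟩ := hzeros z ((hZmem z).1 hz)
      have := hρpos z hz
      simp only [lt_min_iff]
      exact ⟨this, by linarith, by linarith⟩
    set q : ℝ := min m dmin with hq
    have hqpos : 0 < q := lt_min hmpos hdmin_pos
    set r : ℝ := q / 2 with hr
    have hrpos : 0 < r := by positivity
    have hmle : ∀ z ∈ Zf, m ≤ min (ρ z) (min (z - A) (B - z)) :=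
      fun z hz => Finset.inf'_le _ hz
    have hrρ : ∀ z ∈ Zf, r < ρ z := by
      intro z hz
      have h1 := hmle z hz
      have : q ≤ m := min_le_left _ _
      have : r < q := by rw [hr]; linarith
      have h2 : m ≤ ρ z := le_trans h1 (min_le_left _ _)
      linarith [min_le_left m dmin]
    have hrA : ∀ z ∈ Zf, A < z - r := by
      intro z hz
      have h1 : m ≤ z - A := le_trans (hmle z hz) (le_trans (min_le_right _ _) (min_le_left _ _))
      have : q ≤ m := min_le_left _ _
      have : r < q := by rw [hr]; linarith
      linarith
    have hrB : ∀ z ∈ Zf, z + r < B := by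
      intro z hz
      have h1 : m ≤ B - z := le_trans (hmle z hz) (le_trans (min_le_right _ _) (min_le_right _ _))
      have : q ≤ m := min_le_left _ _
      have : r < q := by rw [hr]; linarith
      linarith
    have hrd : ∀ z ∈ Zf, ∀ z' ∈ Zf, z ≠ z' → 2 * r ≤ |z - z'| := by
      intro z hz z' hz' hne'
      have := hdmin_le z hz z' hz' hne'
      have : q ≤ dmin := min_le_right _ _
      rw [hr]
      linarith [hdmin_le z hz z' hz' hne', min_le_right m dmin]
    -- the compact set away from the zeros
    set K : Set ℝ := Set.Icc A B \ ⋃ z ∈ Zf, Set.Ioo (z - r) (z + r) with hK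
    have hKcomp : IsCompact K :=
      isCompact_Icc.diff (isOpen_biUnion fun z _ => isOpen_Ioo)
    have hAK : A ∈ K := by
      rw [hK]
      refine ⟨⟨le_refl A, hAB.le⟩, ?_⟩
      simp only [Set.mem_iUnion, Set.mem_Ioo, not_exists]
      intro z hz h
      exact absurd h.1 (not_lt.mpr (hrA z hz).le)
    have hKne : K.Nonempty := ⟨A, hAK⟩
    have hgK : ∀ t ∈ K, g t ≠ 0 := by
      intro t ht hgt
      have hz : t ∈ Zf := (hZmem t).2 hgt
      refine ht.2 (Set.mem_biUnion hz ?_)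
      exact ⟨by linarith, by linarith⟩
    obtain ⟨t₀, ht₀K, ht₀min⟩ := hKcomp.exists_isMinOn hKne
      ((continuous_abs.comp hgc).continuousOn)
    set ε : ℝ := |g t₀| with hε
    have hεpos : 0 < ε := abs_pos.mpr (hgK t₀ ht₀K)
    have hεle : ∀ t ∈ K, ε ≤ |g t| := fun t ht => ht₀min ht
    -- the constant controlling derivatives
    set c : ℝ := Zf.inf' hne (fun z => |deriv g z| / 2) with hc
    have hcpos : 0 < c := by
      rw [hc, Finset.lt_inf'_iff]
      intro z hz
      have := hsimple z ((hZmem z).1 hz)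
      positivity
    have hcle : ∀ z ∈ Zf, c ≤ |deriv g z| / 2 := fun z hz => Finset.inf'_le _ hz
    set δ : ℝ := min ε c / 2 with hδ
    have hδpos : 0 < δ := by
      have := lt_min hεpos hcpos
      positivity
    have hδε : δ < ε := by
      have : min ε c ≤ ε := min_le_left _ _
      rw [hδ]; linarith [lt_min hεpos hcpos]
    have hδc : ∀ z ∈ Zf, δ < |deriv g z| / 2 := by
      intro z hz
      have h1 : min ε c ≤ c := min_le_right _ _
      have h2 := hcle z hz
      rw [hδ]; linarith [lt_min hεpos hcpos]
    -- endpoints of the small intervals are in K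
    have hendK : ∀ z ∈ Zf, z - r ∈ K ∧ z + r ∈ K := by
      intro z hz
      have hA1 := hrA z hz
      have hB1 := hrB z hz
      have hsub : ∀ s : ℝ, |s - z| ≤ r → s ∉ ⋃ z' ∈ Zf, Set.Ioo (z' - r) (z' + r) → True :=
        fun _ _ _ => trivial
      have hnotin : ∀ s : ℝ, |s - z| = r → s ∉ ⋃ z' ∈ Zf, Set.Ioo (z' - r) (z' + r) := by
        intro s hs hmem
        simp only [Set.mem_iUnion, Set.mem_Ioo] at hmem
        obtain ⟨z', hz', h1, h2⟩ := hmem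
        have hsz' : |s - z'| < r := abs_sub_lt_iff.mpr ⟨by linarith, by linarith⟩
        by_cases hzz : z = z'
        · rw [hzz] at hs; linarith [hs ▸ hsz']
        · have := hrd z hz z' hz' hzz
          have : |z - z'| ≤ |z - s| + |s - z'| := abs_sub_le z s z'
          have h3 : |z - s| = r := by rw [abs_sub_comm]; exact hs
          linarith [hrd z hz z' hz' hzz]
      constructor
      · exact ⟨⟨by linarith, by linarith⟩, hnotin _ (by rw [abs_of_nonpos (by linarith)]; ring)⟩
      · exact ⟨⟨by linarith, by linarith⟩, hnotin _ (by rw [abs_of_nonneg (by linarith)]; ring)⟩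
    have hderivg : ∀ z ∈ Zf, ∀ t : ℝ, |t - z| ≤ r →
        |deriv g t - deriv g z| < |deriv g z| / 2 := by
      intro z hz t ht
      exact hρ z hz t (lt_of_le_of_lt ht (hrρ z hz))
    -- now the main argument
    refine ⟨δ, hδpos, fun f hf hclose hout => ?_⟩
    have hfc : Continuous f := hf.continuous
    -- subset of Icc
    have hIsub : ∀ z ∈ Zf, Set.Icc (z - r) (z + r) ⊆ Set.Icc A B := by
      intro z hz t ht
      exact ⟨by linarith [ht.1, hrA z hz], by linarith [ht.2, hrB z hz]⟩
    -- no zeros of f in K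
    have hfK : ∀ t ∈ K, f t ≠ 0 := by
      intro t ht hft
      have h1 := hclose t ht.1
      have h2 := hεle t ht
      rw [hft] at h1
      have : |0 - g t| = |g t| := by rw [zero_sub, abs_neg]
      rw [this] at h1
      have : (0:ℝ) ≤ |deriv f t - deriv g t| := abs_nonneg _
      linarith
    -- unique zero of f in each small interval
    have huniq : ∀ z ∈ Zf, ∃ s, (s ∈ Set.Ioo (z - r) (z + r) ∧ f s = 0) ∧
        ∀ y, (y ∈ Set.Ioo (z - r) (z + r) ∧ f y = 0) → y = s := by
      intro z hz
      have hgz : g z = 0 := (hZmem z).1 hz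
      have hab : z - r < z + r := by linarith
      have hzK := hendK z hz
      have hclose_a := hclose (z - r) (hIsub z hz ⟨le_refl _, by linarith⟩)
      have hclose_b := hclose (z + r) (hIsub z hz ⟨by linarith, le_refl _⟩)
      have hεa := hεle _ hzK.1
      have hεb := hεle _ hzK.2
      have hδz := hδc z hz
      rcases lt_or_gt_of_ne (hsimple z hgz) with hneg | hpos
      · -- deriv g z < 0 : apply key lemma to -f
        have habs : |deriv g z| = -(deriv g z) := abs_of_neg hneg
        have hgd : ∀ t ∈ Set.Icc (z - r) (z + r), deriv g t < deriv g z / 2 := by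
          intro t ht
          have h := hderivg z hz t (abs_sub_le_iff.mpr ⟨by linarith [ht.2], by linarith [ht.1]⟩)
          rw [habs] at h
          have := (abs_lt.mp h).2
          linarith
        have hganti : StrictAntiOn g (Set.Icc (z - r) (z + r)) :=
          strictAntiOn_of_deriv_neg (convex_Icc _ _) hgc.continuousOn
            (fun t ht => by
              rw [interior_Icc] at ht
              have := hgd t (Set.Ioo_subset_Icc_self ht); linarith)
        have hga : 0 < g (z - r) := by
          have := hganti ⟨le_refl _, hab.le⟩ ⟨by linarith, by linarith⟩ (by linarith : z - r < z)
          rw [hgz] at this; linarith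
        have hgb : g (z + r) < 0 := by
          have := hganti ⟨by linarith, by linarith⟩ ⟨hab.le, le_refl _⟩ (by linarith : z < z + r)
          rw [hgz] at this; linarith
        have hga' : ε ≤ g (z - r) := by rw [abs_of_pos hga] at hεa; exact hεa
        have hgb' : g (z + r) ≤ -ε := by rw [abs_of_neg hgb] at hεb; linarith
        have hfa : 0 < f (z - r) := by
          have := (abs_lt.mp (by linarith [abs_nonneg (deriv f (z - r) - deriv g (z - r))] :
            |f (z - r) - g (z - r)| < δ)).1
          linarith
        have hfb : f (z + r) < 0 := by
          have := (abs_lt.mp (by linarith [abs_nonneg (deriv f (z + r) - deriv g (z + r))] :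
            |f (z + r) - g (z + r)| < δ)).2
          linarith
        have hfd : ∀ t ∈ Set.Icc (z - r) (z + r), 0 < deriv (fun s => -f s) t := by
          intro t ht
          rw [deriv.fun_neg]
          have h1 := hgd t ht
          have h2 := hclose t (hIsub z hz ht)
          have := (abs_lt.mp (by linarith [abs_nonneg (f t - g t)] :
            |deriv f t - deriv g t| < δ)).2
          rw [habs] at hδz
          have : deriv f t < deriv g t + δ := by linarith
          have : deriv f t < 0 := by linarith
          linarith
        obtain ⟨s, ⟨hs, hfs⟩, hu⟩ := key_unique_zero (hfc.neg) hab hfd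
          (by simpa using hfa) (by simpa using hfb)
        refine ⟨s, ⟨hs, by simpa using hfs⟩, fun y ⟨hy, hfy⟩ => hu y ⟨hy, by simpa using hfy⟩⟩
      · -- deriv g z > 0
        have habs : |deriv g z| = deriv g z := abs_of_pos hpos
        have hgd : ∀ t ∈ Set.Icc (z - r) (z + r), deriv g z / 2 < deriv g t := by
          intro t ht
          have h := hderivg z hz t (abs_sub_le_iff.mpr ⟨by linarith [ht.2], by linarith [ht.1]⟩)
          rw [habs] at h
          have := (abs_lt.mp h).1
          linarith
        have hgmono : StrictMonoOn g (Set.Icc (z - r) (z + r)) :=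
          strictMonoOn_of_deriv_pos (convex_Icc _ _) hgc.continuousOn
            (fun t ht => by
              rw [interior_Icc] at ht
              have := hgd t (Set.Ioo_subset_Icc_self ht); linarith)
        have hga : g (z - r) < 0 := by
          have := hgmono ⟨le_refl _, hab.le⟩ ⟨by linarith, by linarith⟩ (by linarith : z - r < z)
          rw [hgz] at this; linarith
        have hgb : 0 < g (z + r) := by
          have := hgmono ⟨by linarith, by linarith⟩ ⟨hab.le, le_refl _⟩ (by linarith : z < z + r)
          rw [hgz] at this; linarith
        have hga' : g (z - r) ≤ -ε := by rw [abs_of_neg hga] at hεa; linarith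
        have hgb' : ε ≤ g (z + r) := by rw [abs_of_pos hgb] at hεb; exact hεb
        have hfa : f (z - r) < 0 := by
          have := (abs_lt.mp (by linarith [abs_nonneg (deriv f (z - r) - deriv g (z - r))] :
            |f (z - r) - g (z - r)| < δ)).2
          linarith
        have hfb : 0 < f (z + r) := by
          have := (abs_lt.mp (by linarith [abs_nonneg (deriv f (z + r) - deriv g (z + r))] :
            |f (z + r) - g (z + r)| < δ)).1
          linarith
        have hfd : ∀ t ∈ Set.Icc (z - r) (z + r), 0 < deriv f t := by
          intro t ht
          have h1 := hgd t ht
          have h2 := hclose t (hIsub z hz ht)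
          have := (abs_lt.mp (by linarith [abs_nonneg (f t - g t)] :
            |deriv f t - deriv g t| < δ)).1
          rw [habs] at hδz
          linarith
        exact key_unique_zero hfc hab hfd hfa hfb
    choose! φ hφmem hφuniq using fun z hz => huniq z hz
    have hφmem' : ∀ z ∈ Zf, φ z ∈ Set.Ioo (z - r) (z + r) := fun z hz => (hφmem z hz).1
    have hφzero : ∀ z ∈ Zf, f (φ z) = 0 := fun z hz => (hφmem z hz).2
    -- zero set of f equals image of φ
    have hset : {t : ℝ | f t = 0} = φ '' (Zf : Set ℝ) := by
      ext t
      simp only [Set.mem_setOf_eq, Set.mem_image, Finset.mem_coe]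
      constructor
      · intro hft
        have htIcc : t ∈ Set.Icc A B := by
          by_contra h
          exact hout t h hft
        have htK : t ∉ K := fun h => hfK t h hft
        have : t ∈ ⋃ z ∈ Zf, Set.Ioo (z - r) (z + r) := by
          by_contra h
          exact htK ⟨htIcc, h⟩
        simp only [Set.mem_iUnion] at this
        obtain ⟨z, hz, hmem⟩ := this
        exact ⟨z, hz, (hφuniq z hz t ⟨hmem, hft⟩).symm⟩
      · rintro ⟨z, hz, rfl⟩
        exact hφzero z hz
    have hinj : Set.InjOn φ (Zf : Set ℝ) := by
      intro z hz z' hz' heq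
      by_contra hne'
      have h1 := hφmem' z (Finset.mem_coe.mp hz)
      have h2 := hφmem' z' (Finset.mem_coe.mp hz')
      rw [heq] at h1
      have hd := hrd z (Finset.mem_coe.mp hz) z' (Finset.mem_coe.mp hz') hne'
      have : |z - z'| ≤ |z - φ z'| + |φ z' - z'| := abs_sub_le z (φ z') z'
      have e1 : |z - φ z'| < r := abs_sub_lt_iff.mpr ⟨by linarith [h1.1], by linarith [h1.2]⟩
      have e2 : |φ z' - z'| < r := abs_sub_lt_iff.mpr ⟨by linarith [h2.2], by linarith [h2.1]⟩
      linarith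
    have hgset : {t : ℝ | g t = 0} = (Zf : Set ℝ) := by
      ext t; simp [hZmem t]
    constructor
    · rw [hset]; exact (Zf.finite_toSet).image φ
    · rw [hset, hgset, Set.ncard_image_of_injOn hinj]
  · -- no zeros of g
    have hZempty : {t : ℝ | g t = 0} = ∅ := by
      ext t
      simp only [Set.mem_setOf_eq, Set.mem_empty_iff_false, iff_false]
      intro h
      exact hne ⟨t, (hZmem t).2 h⟩
    have hgne : ∀ t ∈ Set.Icc A B, g t ≠ 0 := by
      intro t _ h
      exact hne ⟨t, (hZmem t).2 h⟩
    obtain ⟨t₀, ht₀, ht₀min⟩ := isCompact_Icc.exists_isMinOn (Set.nonempty_Icc.mpr hAB.le)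
      ((continuous_abs.comp hg.continuous).continuousOn)
    have hεpos : 0 < |g t₀| := abs_pos.mpr (hgne t₀ ht₀)
    refine ⟨|g t₀|, hεpos, fun f hf hclose hout => ?_⟩
    have hfempty : {t : ℝ | f t = 0} = ∅ := by
      ext t
      simp only [Set.mem_setOf_eq, Set.mem_empty_iff_false, iff_false]
      intro hft
      by_cases ht : t ∈ Set.Icc A B
      · have h1 := hclose t ht
        have h2 : |g t₀| ≤ |g t| := ht₀min ht
        rw [hft, zero_sub, abs_neg] at h1
        linarith [abs_nonneg (deriv f t - deriv g t)]
      · exact hout t ht hft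
    rw [hfempty, hZempty]
    exact ⟨Set.finite_empty, rfl⟩
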